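/- Let α ∈ (0,2). The pushforward of the measure dh/|h|^{1+α} restricted to {h ∈ ℝ : 0 < |h| ≤ 1} under the map h ↦ sgn(h)/(α |h|^α) equals the Lebesgue measure restricted to {z ∈ ℝ : |z| ≥ 1/α}. -/

import Mathlib

open MeasureTheory Real Filter

open Set in
theorem my_lintegral_cov {s : Set ℝ} {f f' : ℝ → ℝ} (hs : MeasurableSet s)
    (hf' : ∀ x ∈ s, HasDerivWithinAt f (f' x) s x) (hf : Set.InjOn f s) (g : ℝ → ENNReal) :
    ∫⁻ x in f '' s, g x = ∫⁻ x in s, ENNReal.ofReal |f' x| * g (f x) := by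
  simpa only [ContinuousLinearMap.det_toSpanSingleton] using
    lintegral_image_eq_lintegral_abs_det_fderiv_mul volume hs
      (fun x hx => (hf' x hx).hasFDerivWithinAt) hf g

theorem stmt18 (α : ℝ) (hα1 : 0 < α) (hα2 : α < 2) :
    Measure.map (fun h : ℝ => Real.sign h / (α * |h| ^ α))
      ((((volume : Measure ℝ).restrict {h : ℝ | 0 < |h| ∧ |h| ≤ 1}).withDensity
        fun h => ENNReal.ofReal (|h| ^ (-(1 + α))))) =
      (volume : Measure ℝ).restrict {z : ℝ | 1 / α ≤ |z|} := by
  set φ : ℝ → ℝ := fun h => Real.sign h / (α * |h| ^ α) with hφdef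
  -- measurability of φ
  have hsign : Measurable Real.sign := by
    have : Real.sign = fun r : ℝ => if r < 0 then (-1:ℝ) else if 0 < r then 1 else 0 :=
      funext fun r => rfl
    rw [this]
    exact Measurable.ite measurableSet_Iio measurable_const
      (Measurable.ite measurableSet_Ioi measurable_const measurable_const)
  have hrpowc : Continuous fun x : ℝ => x ^ α := Real.continuous_rpow_const hα1.le
  have hφ : Measurable φ :=
    hsign.div ((hrpowc.comp continuous_abs).measurable.const_mul α)
  -- positive side map
  set f : ℝ → ℝ := fun h => (α * h ^ α)⁻¹ with hfdef
  set f' : ℝ → ℝ := fun h => -(h ^ (-(1 + α))) with hf'def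
  have hfm : Measurable f := (hrpowc.measurable.const_mul α).inv
  have hfd : ∀ x ∈ Set.Ioc (0:ℝ) 1, HasDerivWithinAt f (f' x) (Set.Ioc 0 1) x := by
    intro x hx
    have hx0 : 0 < x := hx.1
    have h1 : HasDerivAt (fun h : ℝ => h ^ α) (α * x ^ (α - 1)) x :=
      Real.hasDerivAt_rpow_const (Or.inl hx0.ne')
    have h2 := (h1.const_mul α).inv (by positivity)
    have h3 : -(α * (α * x ^ (α - 1))) / (α * x ^ α) ^ 2 = f' x := by
      have e2 : x ^ α * x ^ α = x ^ (α + α) := (Real.rpow_add hx0 α α).symm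
      have e3 : x ^ (α - 1) = x ^ (-(1 + α)) * x ^ (α + α) := by
        rw [← Real.rpow_add hx0]; ring_nf
      rw [div_eq_iff (by positivity : ((α * x ^ α) ^ 2) ≠ 0)]
      simp only [hf'def]
      rw [e3, ← e2]
      ring
    rw [← h3]
    exact h2.hasDerivWithinAt
  have hfi : Set.InjOn f (Set.Ioc (0:ℝ) 1) := by
    intro a ha b hb hab
    have h1 : α * a ^ α = α * b ^ α := inv_inj.mp hab
    have h2 : a ^ α = b ^ α := mul_left_cancel₀ hα1.ne' h1
    exact Real.rpow_left_injOn hα1.ne' (le_of_lt ha.1) (le_of_lt hb.1) h2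
  have himg : f '' Set.Ioc (0:ℝ) 1 = Set.Ici (1 / α) := by
    ext z
    simp only [Set.mem_image, Set.mem_Ioc, Set.mem_Ici]
    constructor
    · rintro ⟨h, ⟨h0, h1⟩, rfl⟩
      have hpow : h ^ α ≤ 1 := Real.rpow_le_one h0.le h1 hα1.le
      have hpos : 0 < h ^ α := Real.rpow_pos_of_pos h0 α
      rw [one_div]
      exact inv_anti₀ (by positivity) (by nlinarith)
    · intro hz
      have hz0 : 0 < z := lt_of_lt_of_le (by positivity) hz
      have haz : (0:ℝ) < α * z := by positivity
      have haz1 : (1:ℝ) ≤ α * z := by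
        rw [div_le_iff₀ hα1] at hz; linarith
      refine ⟨(α * z) ^ (-α⁻¹), ⟨by positivity, ?_⟩, ?_⟩
      · exact Real.rpow_le_one_of_one_le_of_nonpos haz1 (by simp [hα1.le])
      · have hpow : ((α * z) ^ (-α⁻¹ : ℝ)) ^ α = (α * z)⁻¹ := by
          rw [← Real.rpow_mul haz.le, neg_mul, inv_mul_cancel₀ hα1.ne', Real.rpow_neg_one]
        simp only [hfdef, hpow]
        field_simp
  -- negative side map
  set g : ℝ → ℝ := fun h => -(α * (-h) ^ α)⁻¹ with hgdef
  set g' : ℝ → ℝ := fun h => -((-h) ^ (-(1 + α))) with hg'def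
  have hgm : Measurable g :=
    (((hrpowc.comp continuous_neg).measurable.const_mul α).inv).neg
  have hgd : ∀ x ∈ Set.Ico (-1:ℝ) 0, HasDerivWithinAt g (g' x) (Set.Ico (-1) 0) x := by
    intro x hx
    have hx0 : 0 < -x := by simpa using hx.2
    have h1 : HasDerivAt (fun h : ℝ => (-h) ^ α) (α * (-x) ^ (α - 1) * (-1)) x := by
      have ha : HasDerivAt (fun h : ℝ => h ^ α) (α * (-x) ^ (α - 1)) (-x) :=
        Real.hasDerivAt_rpow_const (Or.inl hx0.ne')
      have := ha.comp x (hasDerivAt_neg x)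
      exact this
    have h2 := (((h1.const_mul α).inv (by positivity)).neg)
    have h3 : -(-(α * (α * (-x) ^ (α - 1) * (-1))) / (α * (-x) ^ α) ^ 2) = g' x := by
      have e2 : (-x) ^ α * (-x) ^ α = (-x) ^ (α + α) := (Real.rpow_add hx0 α α).symm
      have e3 : (-x) ^ (α - 1) = (-x) ^ (-(1 + α)) * (-x) ^ (α + α) := by
        rw [← Real.rpow_add hx0]; ring_nf
      rw [neg_div, neg_neg, div_eq_iff (by positivity : ((α * (-x) ^ α) ^ 2) ≠ 0)]
      simp only [hg'def]
      rw [e3, ← e2]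
      ring
    rw [← h3]
    exact h2.hasDerivWithinAt
  have hgi : Set.InjOn g (Set.Ico (-1:ℝ) 0) := by
    intro a ha b hb hab
    have h1 : α * (-a) ^ α = α * (-b) ^ α := inv_inj.mp (neg_inj.mp hab)
    have h2 : (-a) ^ α = (-b) ^ α := mul_left_cancel₀ hα1.ne' h1
    have h3 : -a = -b := Real.rpow_left_injOn hα1.ne'
      (by simp only [Set.mem_setOf_eq]; linarith [ha.2]) (by simp only [Set.mem_setOf_eq]; linarith [hb.2]) h2
    linarith
  have himg2 : g '' Set.Ico (-1:ℝ) 0 = Set.Iic (-(1 / α)) := by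
    have hneg : g '' Set.Ico (-1:ℝ) 0 = -(f '' Set.Ioc 0 1) := by
      ext z
      simp only [Set.mem_image, Set.mem_neg, Set.mem_Ico, Set.mem_Ioc]
      constructor
      · rintro ⟨h, ⟨h1, h2⟩, rfl⟩
        exact ⟨-h, ⟨by linarith, by linarith⟩, by simp [hgdef, hfdef]⟩
      · rintro ⟨h, ⟨h1, h2⟩, he⟩
        refine ⟨-h, ⟨by linarith, by linarith⟩, ?_⟩
        simp only [hgdef, neg_neg]
        rw [show (α * h ^ α)⁻¹ = -z by rw [← he]]
        simp
    rw [hneg, himg]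
    ext z
    simp only [Set.mem_neg, Set.mem_Ici, Set.mem_Iic]
    constructor <;> intro h <;> linarith
  -- extensionality
  refine Measure.ext fun s hs => ?_
  rw [Measure.map_apply hφ hs, withDensity_apply _ (hφ hs),
    Measure.restrict_restrict (hφ hs), Measure.restrict_apply hs]
  have main : ∀ (T : Set ℝ) (hT : MeasurableSet T) (F F' : ℝ → ℝ), Measurable F →
      (∀ x ∈ T, HasDerivWithinAt F (F' x) T x) → Set.InjOn F T →
      (∀ x ∈ T, φ x = F x) → (∀ x ∈ T, |F' x| = |x| ^ (-(1 + α))) →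
      ∫⁻ a in φ ⁻¹' s ∩ T, ENNReal.ofReal (|a| ^ (-(1 + α))) = volume (s ∩ F '' T) := by
    intro T hT F F' hFm hFd hFi hφF habs
    have key := my_lintegral_cov hT hFd hFi (s.indicator 1)
    rw [lintegral_indicator_one hs, Measure.restrict_apply hs] at key
    rw [key]
    calc ∫⁻ a in φ ⁻¹' s ∩ T, ENNReal.ofReal (|a| ^ (-(1 + α)))
        = ∫⁻ a in F ⁻¹' s ∩ T, ENNReal.ofReal (|a| ^ (-(1 + α))) := by
          have hsets : φ ⁻¹' s ∩ T = F ⁻¹' s ∩ T := by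
            ext x
            simp only [Set.mem_inter_iff, Set.mem_preimage, and_congr_left_iff]
            intro hx
            rw [hφF x hx]
          rw [hsets]
      _ = ∫⁻ a in T, (F ⁻¹' s).indicator (fun a => ENNReal.ofReal (|a| ^ (-(1 + α)))) a := by
          rw [lintegral_indicator (hFm hs), Measure.restrict_restrict (hFm hs)]
      _ = ∫⁻ x in T, ENNReal.ofReal |F' x| * s.indicator 1 (F x) := by
          refine setLIntegral_congr_fun hT (fun x hx => ?_)
          by_cases hxs : F x ∈ s
          · simp [Set.indicator, hxs, Set.mem_preimage, habs x hx]
          · simp [Set.indicator, hxs, Set.mem_preimage]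
  have hAeq : {h : ℝ | 0 < |h| ∧ |h| ≤ 1} = Set.Ico (-1:ℝ) 0 ∪ Set.Ioc 0 1 := by
    ext h
    simp only [Set.mem_setOf_eq, abs_pos, abs_le, Set.mem_union, Set.mem_Ico, Set.mem_Ioc]
    constructor
    · rintro ⟨h0, h1, h2⟩
      rcases lt_or_gt_of_ne h0 with hn | hp
      · exact Or.inl ⟨h1, hn⟩
      · exact Or.inr ⟨hp, h2⟩
    · rintro (⟨h1, h2⟩ | ⟨h1, h2⟩)
      · exact ⟨h2.ne, h1, by linarith⟩
      · exact ⟨h1.ne', by linarith, h2⟩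
  have hZeq : {z : ℝ | 1 / α ≤ |z|} = Set.Iic (-(1 / α)) ∪ Set.Ici (1 / α) := by
    ext z
    simp only [Set.mem_setOf_eq, Set.mem_union, Set.mem_Iic, Set.mem_Ici]
    rw [le_abs, or_comm, le_neg]
  rw [hAeq, hZeq, Set.inter_union_distrib_left, Set.inter_union_distrib_left]
  have hdisj1 : Disjoint (φ ⁻¹' s ∩ Set.Ico (-1:ℝ) 0) (φ ⁻¹' s ∩ Set.Ioc 0 1) := by
    refine Disjoint.mono Set.inter_subset_right Set.inter_subset_right ?_
    exact Set.disjoint_left.mpr fun x hx hx' => absurd hx'.1 (not_lt.mpr hx.2.le)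
  have hdisj2 : Disjoint (s ∩ Set.Iic (-(1 / α))) (s ∩ Set.Ici (1 / α)) := by
    refine Disjoint.mono Set.inter_subset_right Set.inter_subset_right ?_
    refine Set.disjoint_left.mpr fun x hx hx' => ?_
    have : (0:ℝ) < 1 / α := by positivity
    simp only [Set.mem_Iic] at hx
    simp only [Set.mem_Ici] at hx'
    linarith
  rw [lintegral_union ((hφ hs).inter measurableSet_Ioc) hdisj1,
    measure_union hdisj2 (hs.inter measurableSet_Ici)]
  congr 1
  · rw [← himg2]
    refine main _ measurableSet_Ico g g' hgm hgd hgi ?_ ?_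
    · intro x hx
      have hx0 : x < 0 := hx.2
      simp only [hφdef, hgdef, Real.sign_of_neg hx0, abs_of_neg hx0]
      rw [neg_div, one_div]
    · intro x hx
      have hx0 : x < 0 := hx.2
      simp only [hg'def, abs_neg, abs_of_neg hx0]
      exact abs_of_pos (Real.rpow_pos_of_pos (by linarith) _)
  · rw [← himg]
    refine main _ measurableSet_Ioc f f' hfm hfd hfi ?_ ?_
    · intro x hx
      have hx0 : 0 < x := hx.1
      simp only [hφdef, hfdef, Real.sign_of_pos hx0, abs_of_pos hx0]
      rw [one_div]
    · intro x hx
      have hx0 : 0 < x := hx.1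
      simp only [hf'def, abs_neg, abs_of_pos hx0]
      exact abs_of_pos (Real.rpow_pos_of_pos hx0 _)
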